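/- Let T = σ * θ̊ * τ̇ be a Morse tile, written in its unique decomposition as the join of a closed simplex σ, an open simplex θ̊ and a closed simplex τ of non-vanishing dimension deprived of its empty face, and assume T is not reduced to τ̇. Then sd(T) = ⋃_v st_{sd(T)}(v̂), where the union is taken over all vertices v of the underlying simplex σ * θ * τ. -/

import Mathlib

/-!
Common combinatorial framework for Morse shellings of simplicial complexes,
following J.-Y. Welschinger, "Morse shellings out of discrete Morse functions".
-/

namespace MorseShelling

variable {V : Type*} [DecidableEq V] {W : Type*} [DecidableEq W]

/-- A (finite, combinatorial) simplicial complex: a downward-closed collection of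
finite subsets (simplices) of the vertex type. -/
def IsComplex (K : Finset (Finset V)) : Prop :=
  ∀ σ ∈ K, ∀ τ ⊆ σ, τ ∈ K

/-- A relative simplicial complex `S = K \ L`, recorded as the pair `(K, L)`. -/
structure RelCplx (V : Type*) where
  K : Finset (Finset V)
  L : Finset (Finset V)

/-- The faces of a relative simplicial complex. -/
def RelCplx.faces (S : RelCplx V) : Finset (Finset V) := S.K \ S.L

/-- Validity of a relative simplicial complex: both members are complexes and
`L` is a subcomplex of `K`. -/
def RelCplx.IsValid (S : RelCplx V) : Prop :=
  IsComplex S.K ∧ IsComplex S.L ∧ S.L ⊆ S.K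

/-- Join of two collections of faces (on disjoint vertex supports). -/
def joinF (K₁ K₂ : Finset (Finset V)) : Finset (Finset V) :=
  (K₁ ×ˢ K₂).image fun p => p.1 ∪ p.2

/-- Join of two relative simplicial complexes:
`(K₁ * K₂) \ ((L₁ * K₂) ∪ (K₁ * L₂))`. -/
def RelCplx.join (S₁ S₂ : RelCplx V) : RelCplx V :=
  ⟨joinF S₁.K S₂.K, joinF S₁.L S₂.K ∪ joinF S₁.K S₂.L⟩

/-- The star of a simplex `σ` in `K` : all faces `τ` with `σ ∪ τ ∈ K`. -/
def star (K : Finset (Finset V)) (σ : Finset V) : Finset (Finset V) :=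
  K.filter fun τ => σ ∪ τ ∈ K

/-- The link of a simplex `σ` in `K` : all faces `τ` of the star disjoint from `σ`. -/
def link (K : Finset (Finset V)) (σ : Finset V) : Finset (Finset V) :=
  K.filter fun τ => σ ∪ τ ∈ K ∧ σ ∩ τ = ∅

/-- The star of a simplex in a relative complex, `st_S(σ) = st_K(σ) \ st_L(σ)`. -/
def RelCplx.starR (S : RelCplx V) (σ : Finset V) : RelCplx V :=
  ⟨star S.K σ, star S.L σ⟩

/-- The link of a simplex in a relative complex, `lk_S(σ) = lk_K(σ) \ lk_L(σ)`. -/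
def RelCplx.linkR (S : RelCplx V) (σ : Finset V) : RelCplx V :=
  ⟨link S.K σ, link S.L σ⟩

/-- The boundary complex of a simplex: all its proper faces (including `∅`). -/
def boundary (σ : Finset V) : Finset (Finset V) := σ.powerset.erase σ

/-- First barycentric subdivision: the faces are the (possibly empty) flags
`∅ ≠ σ₀ ⊊ σ₁ ⊊ ... ⊊ σ_q` of nonempty faces of `K`, a nonempty face `σ` of `K`
becoming the vertex `σ̂ = σ`. By convention `sd ∅ = ∅`. -/
def sd (K : Finset (Finset V)) : Finset (Finset (Finset V)) :=
  if K = ∅ then ∅ else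
    (K.erase ∅).powerset.filter fun c => ∀ a ∈ c, ∀ b ∈ c, a ⊆ b ∨ b ⊆ a

/-- First barycentric subdivision of a relative complex: `sd (K \ L) = sd K \ sd L`. -/
def RelCplx.sdR (S : RelCplx V) : RelCplx (Finset V) := ⟨sd S.K, sd S.L⟩

/-- An (absolute) simplicial complex seen as a relative one. -/
def toRel (K : Finset (Finset V)) : RelCplx V := ⟨K, ∅⟩

/-- The vertex support of a relative complex. -/
def suppK (S : RelCplx V) : Finset V := S.K.sup id

/-- The ridges (codimension one faces) of a simplex. -/
def ridges (σ : Finset V) : Finset (Finset V) := σ.image fun v => σ.erase v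

/-- The subcomplex of the simplex `σ` consisting of the faces contained in some
member of `R`. -/
def below (σ : Finset V) (R : Finset (Finset V)) : Finset (Finset V) :=
  σ.powerset.filter fun τ => ∃ ρ ∈ R, τ ⊆ ρ

/-- The restriction set of the basic tile `σ \ R`: the face spanned by the
vertices opposite to the missing ridges `R`. -/
def restSet (σ : Finset V) (R : Finset (Finset V)) : Finset V :=
  σ.filter fun v => σ.erase v ∈ R

/-- A basic tile of dimension `n` and order `k`: an `n`-simplex deprived of `k`
of its ridges (together with all the faces contained in them). -/
def IsBasicTile (S : RelCplx V) (n k : ℕ) : Prop :=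
  ∃ σ : Finset V, σ.card = n + 1 ∧ S.K = σ.powerset ∧
    ∃ R ⊆ ridges σ, R.card = k ∧ S.L = below σ R

/-- A Morse tile of dimension `n` and order `k`: a basic tile, possibly further
deprived of a unique face of higher codimension (its Morse face). -/
def IsMorseTile (S : RelCplx V) (n k : ℕ) : Prop :=
  ∃ σ : Finset V, σ.card = n + 1 ∧ S.K = σ.powerset ∧
    ∃ R ⊆ ridges σ, R.card = k ∧
      (S.L = below σ R ∨
        ∃ μ ⊆ σ, μ ∉ below σ R ∧ μ.card + 2 ≤ σ.card ∧
          S.L = below σ R ∪ below σ {μ})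

/-- A critical tile of dimension `n` and index `k`: either a closed simplex
(index `0`), or a basic tile of order `k` deprived of its restriction set
(this includes the dotted simplex for `k = 0` and the open simplex for `k = n`). -/
def IsCriticalTile (S : RelCplx V) (n k : ℕ) : Prop :=
  ∃ σ : Finset V, σ.card = n + 1 ∧ S.K = σ.powerset ∧
    ((k = 0 ∧ S.L = ∅) ∨
      (k ≤ n ∧ ∃ R ⊆ ridges σ, R.card = k ∧
        S.L = below σ R ∪ below σ {restSet σ R}))

/-- A closed simplex, as a tile. -/
def IsClosedSimplexTile (S : RelCplx V) : Prop :=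
  ∃ σ : Finset V, S.K = σ.powerset ∧ S.L = ∅

/-- An open simplex, as a tile: deprived of its whole boundary, incl. the empty face. -/
def IsOpenSimplexTile (S : RelCplx V) : Prop :=
  ∃ σ : Finset V, σ ≠ ∅ ∧ S.K = σ.powerset ∧ S.L = σ.powerset.erase σ

/-- The closed simplex on vertex set `σ`, as a relative complex. -/
def closedT (σ : Finset V) : RelCplx V := ⟨σ.powerset, ∅⟩

/-- The open simplex on vertex set `σ`. -/
def openT (σ : Finset V) : RelCplx V := ⟨σ.powerset, σ.powerset.erase σ⟩

/-- The closed simplex deprived of its empty face, `σ̇` (the neutral tile when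
`σ = ∅`, so that empty factors may be dropped from joins). -/
def dotT (σ : Finset V) : RelCplx V := ⟨σ.powerset, if σ = ∅ then ∅ else {∅}⟩

/-- The Morse tile `σ * θ̊ * τ̇`. -/
def splitTile (σ θ τ : Finset V) : RelCplx V :=
  (closedT σ).join ((openT θ).join (dotT τ))

/-- A tiling of a relative simplicial complex by `N` relative facets: the tiles
are relative simplices whose underlying simplices are facets, and their faces
partition the faces of `S`. -/
structure Tiling (S : RelCplx W) (N : ℕ) where
  tile : Fin N → RelCplx W
  isFacet : ∀ i, ∃ σ ∈ S.K, (∀ τ ∈ S.K, σ ⊆ τ → τ = σ) ∧ (tile i).K = σ.powerset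
  subL : ∀ i, (tile i).L ⊆ (tile i).K
  disj : ∀ i j, i ≠ j → Disjoint (tile i).faces (tile j).faces
  cover : (Finset.univ : Finset (Fin N)).biUnion (fun i => (tile i).faces) = S.faces

/-- The union of the faces of the first `p` tiles of a tiling. -/
def Tiling.prefixFaces {S : RelCplx W} {N : ℕ} (T : Tiling S N) (p : ℕ) :
    Finset (Finset W) :=
  (Finset.univ.filter fun i : Fin N => (i : ℕ) < p).biUnion fun i => (T.tile i).faces

/-- A tiling is a shelling when each of the sets of faces of `S_p = K_p \ L`
is a relative subcomplex, i.e. `L ∪ (tiles of index < p)` is a complex. -/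
def Tiling.IsShelling {S : RelCplx W} {N : ℕ} (T : Tiling S N) : Prop :=
  ∀ p ≤ N, IsComplex (S.L ∪ T.prefixFaces p)

/-- A (shelled) tiling begins with a set `F` of faces when some initial segment
of its tiles partitions exactly `F`. -/
def Tiling.BeginsWith {S : RelCplx W} {N : ℕ} (T : Tiling S N)
    (F : Finset (Finset W)) : Prop :=
  ∃ p ≤ N, T.prefixFaces p = F

/-- A Morse tiling: all tiles are Morse tiles. -/
def Tiling.IsMorse {S : RelCplx W} {N : ℕ} (T : Tiling S N) : Prop :=
  ∀ i, ∃ n k, IsMorseTile (T.tile i) n k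

/-- An h-tiling: all tiles are basic or critical tiles. -/
def Tiling.IsH {S : RelCplx W} {N : ℕ} (T : Tiling S N) : Prop :=
  ∀ i, (∃ n k, IsBasicTile (T.tile i) n k) ∨ (∃ n k, IsCriticalTile (T.tile i) n k)

/-- `f` induces a simplicial isomorphism from `A` onto `B` (both viewed through
their collections of faces). -/
def IsSimplicialIso (f : V → W) (A : Finset (Finset V)) (B : Finset (Finset W)) : Prop :=
  Set.BijOn (fun σ : Finset V => σ.image f) ↑A ↑B

/-- `f` induces an isomorphism of relative simplicial complexes. -/
def IsRelIso (f : V → W) (S : RelCplx V) (S' : RelCplx W) : Prop :=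
  Set.BijOn (fun σ : Finset V => σ.image f) ↑S.K ↑S'.K ∧
    Set.BijOn (fun σ : Finset V => σ.image f) ↑S.L ↑S'.L

/-- The first derived neighborhood `N(L, K)` of a subcomplex `L` in `K` : the union
of the stars in `sd K` of the vertices of `L`. -/
def derivedNbhd (L K : Finset (Finset V)) : Finset (Finset (Finset V)) :=
  (L.filter fun s => s.card = 1).biUnion fun s => star (sd K) {s}

/-- The faces of the derived neighborhood `N(T, S)` of a tile `T` in a relative
complex `S`: the union of the relative stars in `sd S` of the vertices of `T`. -/
def relDerivedNbhd (T S : RelCplx V) : Finset (Finset (Finset V)) :=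
  ((suppK T).biUnion fun v => ((S.sdR).starR {({v} : Finset V)}).faces) ∩ (S.sdR).faces

/-- A discrete Morse function on the finite simplicial complex `K`. -/
def IsDiscreteMorse (K : Finset (Finset V)) (f : Finset V → ℝ) : Prop :=
  ∀ σ ∈ K, σ ≠ ∅ →
    (K.filter fun τ => σ ⊂ τ ∧ f τ ≤ f σ).card ≤ 1 ∧
    (K.filter fun θ => θ ≠ ∅ ∧ θ ⊂ σ ∧ f σ ≤ f θ).card ≤ 1

/-- A critical face of a discrete Morse function. -/
def IsCriticalFace (K : Finset (Finset V)) (f : Finset V → ℝ) (σ : Finset V) : Prop :=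
  σ ∈ K ∧ σ ≠ ∅ ∧ (∀ τ ∈ K, σ ⊂ τ → f σ < f τ) ∧
    ∀ θ ∈ K, θ ≠ ∅ → θ ⊂ σ → f θ < f σ

/-- An elementary collapse: removal of a facet `τ` together with a ridge `θ` of it
contained in no other facet. -/
def ElementaryCollapse (K K' : Finset (Finset V)) : Prop :=
  ∃ τ ∈ K, ∃ θ ∈ K, θ ⊆ τ ∧ τ.card = θ.card + 1 ∧
    (∀ ρ ∈ K, τ ⊆ ρ → ρ = τ) ∧
    (∀ ρ ∈ K, θ ⊆ ρ → ρ = θ ∨ ρ = τ) ∧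
    K' = (K.erase τ).erase θ

/-- A finite simplicial complex is collapsible when some finite sequence of
elementary collapses reduces it to a single vertex. -/
def Collapsible (K : Finset (Finset V)) : Prop :=
  ∃ v : V, Relation.ReflTransGen ElementaryCollapse K {∅, {v}}

section Aux

variable {V : Type*} [DecidableEq V]

lemma mem_joinF {K₁ K₂ : Finset (Finset V)} {ρ : Finset V} :
    ρ ∈ joinF K₁ K₂ ↔ ∃ a ∈ K₁, ∃ b ∈ K₂, ρ = a ∪ b := by
  simp only [joinF, Finset.mem_image, Finset.mem_product, Prod.exists]
  constructor
  · rintro ⟨a, b, ⟨ha, hb⟩, rfl⟩; exact ⟨a, ha, b, hb, rfl⟩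
  · rintro ⟨a, ha, b, hb, rfl⟩; exact ⟨a, b, ⟨ha, hb⟩, rfl⟩

lemma joinF_powerset (s t : Finset V) :
    joinF s.powerset t.powerset = (s ∪ t).powerset := by
  ext ρ
  simp only [mem_joinF, Finset.mem_powerset]
  constructor
  · rintro ⟨a, ha, b, hb, rfl⟩; exact Finset.union_subset_union ha hb
  · intro h
    refine ⟨ρ ∩ s, Finset.inter_subset_right, ρ ∩ t, Finset.inter_subset_right, ?_⟩
    rw [← Finset.inter_union_distrib_left, Finset.inter_eq_left.2 h]

lemma mem_sd {K c : Finset (Finset V)} :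
    c ∈ sd K ↔ K ≠ ∅ ∧ (∀ ρ ∈ c, ρ ∈ K ∧ ρ ≠ ∅) ∧
      ∀ a ∈ c, ∀ b ∈ c, a ⊆ b ∨ b ⊆ a := by
  unfold sd
  split_ifs with h
  · simp [h]
  · simp only [Finset.mem_filter, Finset.mem_powerset, h, ne_eq, not_false_iff, true_and]
    constructor
    · rintro ⟨hs, hc⟩
      refine ⟨fun ρ hρ => ?_, hc⟩
      have := hs hρ
      rw [Finset.mem_erase] at this
      exact ⟨this.2, this.1⟩
    · rintro ⟨hs, hc⟩
      exact ⟨fun ρ hρ => Finset.mem_erase.2 ⟨(hs ρ hρ).2, (hs ρ hρ).1⟩, hc⟩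

lemma K_splitTile (σ θ τ : Finset V) :
    (splitTile σ θ τ).K = (σ ∪ θ ∪ τ).powerset := by
  show joinF σ.powerset (joinF θ.powerset τ.powerset) = _
  rw [joinF_powerset, joinF_powerset, Finset.union_assoc]

lemma mem_L_splitTile {σ θ τ : Finset V} (h₁ : Disjoint σ θ) (h₂ : Disjoint σ τ)
    (h₃ : Disjoint θ τ) {ρ : Finset V} :
    ρ ∈ (splitTile σ θ τ).L ↔
      ρ ⊆ σ ∪ θ ∪ τ ∧ (¬ θ ⊆ ρ ∨ (τ ≠ ∅ ∧ ρ ∩ τ = ∅)) := by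
  have hLdef : (splitTile σ θ τ).L =
      joinF ∅ (joinF θ.powerset τ.powerset) ∪
        joinF σ.powerset
          (joinF (θ.powerset.erase θ) τ.powerset ∪
            joinF θ.powerset (if τ = ∅ then ∅ else {∅})) := rfl
  rw [hLdef]
  have hjoinEmpty : joinF (∅ : Finset (Finset V)) (joinF θ.powerset τ.powerset) = ∅ := by
    simp [joinF]
  rw [hjoinEmpty, Finset.empty_union]
  constructor
  · rw [mem_joinF]
    rintro ⟨a, ha, y, hy, rfl⟩
    rw [Finset.mem_powerset] at ha
    rw [Finset.mem_union] at hy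
    rcases hy with hy | hy
    · rw [mem_joinF] at hy
      obtain ⟨b, hb, d, hd, rfl⟩ := hy
      rw [Finset.mem_erase, Finset.mem_powerset] at hb
      rw [Finset.mem_powerset] at hd
      constructor
      · intro x hx
        simp only [Finset.mem_union] at hx ⊢
        rcases hx with h | h | h
        · exact Or.inl (Or.inl (ha h))
        · exact Or.inl (Or.inr (hb.2 h))
        · exact Or.inr (hd h)
      · left
        intro hθ
        apply hb.1
        refine (Finset.Subset.antisymm ?_ hb.2).symm
        intro x hx
        rcases Finset.mem_union.1 (hθ hx) with h | h
        · exact absurd hx (Finset.disjoint_left.1 h₁ (ha h))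
        · rcases Finset.mem_union.1 h with h | h
          · exact h
          · exact absurd (hd h) (Finset.disjoint_left.1 h₃ hx)
    · rw [mem_joinF] at hy
      obtain ⟨b, hb, d, hd, rfl⟩ := hy
      rw [Finset.mem_powerset] at hb
      by_cases hτ : τ = ∅
      · simp [hτ] at hd
      · simp only [hτ, if_false, Finset.mem_singleton] at hd
        subst hd
        rw [Finset.union_empty]
        refine ⟨?_, Or.inr ⟨hτ, ?_⟩⟩
        · intro x hx
          simp only [Finset.mem_union] at hx ⊢
          rcases hx with h | h
          · exact Or.inl (Or.inl (ha h))
          · exact Or.inl (Or.inr (hb h))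
        · rw [Finset.union_inter_distrib_right,
            Finset.disjoint_iff_inter_eq_empty.mp (h₂.mono_left ha),
            Finset.disjoint_iff_inter_eq_empty.mp (h₃.mono_left hb), Finset.union_empty]
  · rintro ⟨hsub, hcase⟩
    rw [mem_joinF]
    rcases hcase with hθ | ⟨hτ, hd⟩
    · refine ⟨ρ ∩ σ, Finset.mem_powerset.2 Finset.inter_subset_right,
        (ρ ∩ θ) ∪ (ρ ∩ τ), ?_, ?_⟩
      · rw [Finset.mem_union]
        left
        rw [mem_joinF]
        refine ⟨ρ ∩ θ, ?_, ρ ∩ τ, Finset.mem_powerset.2 Finset.inter_subset_right, rfl⟩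
        rw [Finset.mem_erase, Finset.mem_powerset]
        refine ⟨fun h => hθ ?_, Finset.inter_subset_right⟩
        rw [← h]; exact Finset.inter_subset_left
      · rw [← Finset.inter_union_distrib_left, ← Finset.inter_union_distrib_left,
          ← Finset.union_assoc, Finset.inter_eq_left.2 hsub]
        
    · refine ⟨ρ ∩ σ, Finset.mem_powerset.2 Finset.inter_subset_right, ρ ∩ θ, ?_, ?_⟩
      · rw [Finset.mem_union]
        right
        rw [mem_joinF]
        refine ⟨ρ ∩ θ, Finset.mem_powerset.2 Finset.inter_subset_right, ∅, ?_, by simp⟩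
        simp [hτ]
      · have : ρ = (ρ ∩ σ) ∪ (ρ ∩ θ) ∪ (ρ ∩ τ) := by
          rw [← Finset.inter_union_distrib_left, ← Finset.inter_union_distrib_left,
            Finset.inter_eq_left.2 hsub]
        rw [hd, Finset.union_empty] at this
        exact this

lemma singleton_mem_L_splitTile {σ θ τ : Finset V} (h₁ : Disjoint σ θ)
    (h₂ : Disjoint σ τ) (h₃ : Disjoint θ τ) {ρ : Finset V} {v : V}
    (hρ : ρ ∈ (splitTile σ θ τ).L) (hv : v ∈ ρ) : ({v} : Finset V) ∈ (splitTile σ θ τ).L := by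
  rw [mem_L_splitTile h₁ h₂ h₃] at hρ ⊢
  obtain ⟨hsub, hcase⟩ := hρ
  refine ⟨Finset.singleton_subset_iff.2 (hsub hv), ?_⟩
  rcases hcase with h | ⟨ht, hd⟩
  · left
    intro hθv
    apply h
    rcases Finset.subset_singleton_iff.1 hθv with rfl | rfl
    · exact Finset.empty_subset ρ
    · exact Finset.singleton_subset_iff.2 hv
  · right
    refine ⟨ht, Finset.singleton_inter_of_notMem fun hvτ => ?_⟩
    exact Finset.eq_empty_iff_forall_notMem.1 hd v (Finset.mem_inter.2 ⟨hv, hvτ⟩)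

end Aux

/-- **Corollary.** If the Morse tile `T = σ * θ̊ * τ̇` is not reduced to `τ̇`, then
`sd T` is the union of the stars `st_{sd T}(v̂)` over the vertices `v` of the
underlying simplex `σ * θ * τ` (an equality of the sets of nonempty faces). -/
theorem sd_of_morse_tile_eq_union_of_stars
    {V : Type*} [DecidableEq V] (σ θ τ : Finset V)
    (h₁ : Disjoint σ θ) (h₂ : Disjoint σ τ) (h₃ : Disjoint θ τ)
    (hdim : τ = ∅ ∨ 2 ≤ τ.card) (hne : (σ ∪ θ).Nonempty) :
    (((splitTile σ θ τ).sdR).faces).erase ∅ =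
      ((σ ∪ θ ∪ τ).biUnion fun v =>
        (((splitTile σ θ τ).sdR).starR {({v} : Finset V)}).faces).erase ∅ := by
  classical
  have hK := K_splitTile σ θ τ
  ext c
  simp only [Finset.mem_erase, RelCplx.faces, RelCplx.starR, star,
    Finset.mem_sdiff, Finset.mem_biUnion, Finset.mem_filter]
  simp only [RelCplx.sdR]
  constructor
  · rintro ⟨hc0, hcK, hcL⟩
    refine ⟨hc0, ?_⟩
    rw [mem_sd] at hcK
    obtain ⟨hKne, hmem, hchain⟩ := hcK
    obtain ⟨ρ₀, hρ₀c, hmin⟩ := Finset.exists_min_image c Finset.card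
      (Finset.nonempty_iff_ne_empty.2 hc0)
    have hmin' : ∀ ρ ∈ c, ρ₀ ⊆ ρ := by
      intro ρ hρ
      rcases hchain ρ₀ hρ₀c ρ hρ with h | h
      · exact h
      · rw [Finset.eq_of_subset_of_card_le h (hmin ρ hρ)]
    obtain ⟨v, hv⟩ := Finset.nonempty_iff_ne_empty.2 (hmem ρ₀ hρ₀c).2
    have hr0s : ρ₀ ⊆ σ ∪ θ ∪ τ := by
      have := (hmem ρ₀ hρ₀c).1
      rw [hK, Finset.mem_powerset] at this
      exact this
    refine ⟨v, hr0s hv, ⟨⟨mem_sd.2 ⟨hKne, hmem, hchain⟩, ?_⟩, ?_⟩⟩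
    · rw [mem_sd]
      refine ⟨hKne, ?_, ?_⟩
      · intro ρ hρ
        rcases Finset.mem_union.1 hρ with h | h
        · rw [Finset.mem_singleton] at h
          subst h
          refine ⟨?_, Finset.singleton_ne_empty v⟩
          rw [hK, Finset.mem_powerset]
          exact Finset.singleton_subset_iff.2 (hr0s hv)
        · exact hmem ρ h
      · intro a ha b hb
        rcases Finset.mem_union.1 ha with ha' | ha' <;>
          rcases Finset.mem_union.1 hb with hb' | hb'
        · rw [Finset.mem_singleton] at ha' hb'; subst ha'; subst hb'; left; rfl
        · rw [Finset.mem_singleton] at ha'; subst ha'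
          left
          exact Finset.singleton_subset_iff.2 (hmin' b hb' hv)
        · rw [Finset.mem_singleton] at hb'; subst hb'
          right
          exact Finset.singleton_subset_iff.2 (hmin' a ha' hv)
        · exact hchain a ha' b hb'
    · intro h
      exact hcL h.1
  · rintro ⟨hc0, v, hvs, ⟨⟨hcK, hvcK⟩, hns⟩⟩
    refine ⟨hc0, hcK, ?_⟩
    intro hcL
    by_cases hvL : ({v} : Finset V) ∈ (splitTile σ θ τ).L
    · apply hns
      refine ⟨hcL, ?_⟩
      rw [mem_sd] at hcL hvcK ⊢
      refine ⟨Finset.ne_empty_of_mem hvL, ?_, hvcK.2.2⟩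
      intro ρ hρ
      rcases Finset.mem_union.1 hρ with h | h
      · rw [Finset.mem_singleton] at h
        subst h
        exact ⟨hvL, Finset.singleton_ne_empty v⟩
      · exact hcL.2.1 ρ h
    · obtain ⟨ρ, hρ⟩ := Finset.nonempty_iff_ne_empty.2 hc0
      rw [mem_sd] at hcL hvcK
      have hρL : ρ ∈ (splitTile σ θ τ).L := (hcL.2.1 ρ hρ).1
      have hρne : ρ ≠ ∅ := (hcL.2.1 ρ hρ).2
      have hvρ : v ∈ ρ := by
        rcases hvcK.2.2 {v} (Finset.mem_union_left _ (Finset.mem_singleton_self _)) ρ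
          (Finset.mem_union_right _ hρ) with h | h
        · exact h (Finset.mem_singleton_self v)
        · rcases Finset.subset_singleton_iff.1 h with rfl | rfl
          · exact absurd rfl hρne
          · exact Finset.mem_singleton_self v
      exact hvL (singleton_mem_L_splitTile h₁ h₂ h₃ hρL hvρ)


end MorseShelling
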